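/- For all n ≥ 1: the number of permutations in S_n({123,231}) with no big descents is n; the number with exactly one big descent is C(n−1, 2); and there are no permutations in S_n({123,231}) with two or more big descents. -/

import Mathlib

open scoped Classical

/-- A permutation `π` of `Fin n` contains the pattern `σ` (a permutation of `Fin m`)
if some subsequence of the one-line notation of `π` standardizes to `σ`. -/
def Contains {n m : ℕ} (π : Equiv.Perm (Fin n)) (σ : Equiv.Perm (Fin m)) : Prop :=
  ∃ f : Fin m → Fin n, StrictMono f ∧ ∀ a b : Fin m, σ a < σ b ↔ π (f a) < π (f b)

/-- `π` avoids the pattern `σ`. -/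
def Avoids {n m : ℕ} (π : Equiv.Perm (Fin n)) (σ : Equiv.Perm (Fin m)) : Prop :=
  ¬ Contains π σ

/-- The pattern 123 (identity, in 0-indexed one-line notation `[0,1,2]`). -/
def perm123 : Equiv.Perm (Fin 3) := 1

/-- The pattern 132 (0-indexed one-line notation `[0,2,1]`). -/
def perm132 : Equiv.Perm (Fin 3) := ⟨![0, 2, 1], ![0, 2, 1], by decide, by decide⟩

/-- The pattern 213 (0-indexed one-line notation `[1,0,2]`). -/
def perm213 : Equiv.Perm (Fin 3) := ⟨![1, 0, 2], ![1, 0, 2], by decide, by decide⟩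

/-- The pattern 231 (0-indexed one-line notation `[1,2,0]`). -/
def perm231 : Equiv.Perm (Fin 3) := ⟨![1, 2, 0], ![2, 0, 1], by decide, by decide⟩

/-- The pattern 312 (0-indexed one-line notation `[2,0,1]`). -/
def perm312 : Equiv.Perm (Fin 3) := ⟨![2, 0, 1], ![1, 2, 0], by decide, by decide⟩

/-- The pattern 321 (0-indexed one-line notation `[2,1,0]`). -/
def perm321 : Equiv.Perm (Fin 3) := ⟨![2, 1, 0], ![2, 1, 0], by decide, by decide⟩

/-- The number of big descents of `π`: 0-indexed positions `k` with `π k > π (k+1) + 1`. -/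
def bdes {n : ℕ} (π : Equiv.Perm (Fin n)) : ℕ :=
  ((Finset.range n).filter fun k =>
    ∃ hk : k + 1 < n, (π ⟨k + 1, hk⟩ : ℕ) + 1 < (π ⟨k, Nat.lt_of_succ_lt hk⟩ : ℕ)).card


/-- rotate the interval [0,b) by k, fix everything else -/
def rotFun (b k i : ℕ) : ℕ := if i < b then (i + k) % b else i

lemma rot_lt_b {b k i : ℕ} (h : i < b) : rotFun b k i < b := by
  unfold rotFun; rw [if_pos h]; exact Nat.mod_lt _ (by omega)

lemma rot_lt {b k i n : ℕ} (hb : b ≤ n) (h : i < n) : rotFun b k i < n := by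
  unfold rotFun; split
  · exact lt_of_lt_of_le (Nat.mod_lt _ (by omega)) hb
  · exact h

lemma rot_add (b k1 k2 i : ℕ) : rotFun b k1 (rotFun b k2 i) = rotFun b (k2 + k1) i := by
  unfold rotFun
  by_cases h : i < b
  · rw [if_pos h, if_pos (Nat.mod_lt _ (by omega)), if_pos h, Nat.mod_add_mod, Nat.add_assoc]
  · rw [if_neg h, if_neg h, if_neg h]

lemma rot_dvd {b k : ℕ} (h : b ∣ k) (i : ℕ) : rotFun b k i = i := by
  unfold rotFun; split
  · obtain ⟨m, rfl⟩ := h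
    rw [Nat.add_mul_mod_self_left]; exact Nat.mod_eq_of_lt ‹_›
  · rfl

lemma rot_closed {b k i : ℕ} (h : i < b) :
    rotFun b k i = if i + k % b < b then i + k % b else i + k % b - b := by
  unfold rotFun
  rw [if_pos h, Nat.add_mod, Nat.mod_eq_of_lt h]
  have hkb : k % b < b := Nat.mod_lt _ (by omega)
  split
  · exact Nat.mod_eq_of_lt (by omega)
  · rw [Nat.mod_eq_sub_mod (by omega), Nat.mod_eq_of_lt (by omega)]

lemma bdvd {b : ℕ} (hb : 1 ≤ b) (k : ℕ) : b ∣ (k + (b - k % b)) := by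
  have h1 : k % b < b := Nat.mod_lt _ (by omega)
  have h2 : k % b ≤ k := Nat.mod_le k b
  have h3 : k + (b - k % b) = (k - k % b) + b := by omega
  rw [h3]
  exact dvd_add (Nat.dvd_sub_mod k) dvd_rfl

def Pfun (n b k i : ℕ) : ℕ := rotFun b k (n - 1 - i)

lemma pfun_lt {n b k i : ℕ} (hbn : b ≤ n) (hi : i < n) : Pfun n b k i < n :=
  rot_lt hbn (by omega)

/-- the permutation ρ_{b,k} ∘ rev -/
def Pperm (n b k : ℕ) (hb : 1 ≤ b) (hbn : b ≤ n) : Equiv.Perm (Fin n) where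
  toFun i := ⟨Pfun n b k i, pfun_lt hbn i.isLt⟩
  invFun i := ⟨n - 1 - rotFun b (b - k % b) i, by omega⟩
  left_inv i := by
    ext
    simp only [Pfun]
    rw [rot_add, rot_dvd (bdvd hb k)]
    have := i.isLt
    show n - 1 - (n - 1 - (i : ℕ)) = i
    omega
  right_inv i := by
    ext
    simp only [Pfun]
    have h1 : rotFun b (b - k % b) ↑i < n := rot_lt hbn i.isLt
    have : n - 1 - (n - 1 - rotFun b (b - k % b) ↑i) = rotFun b (b - k % b) ↑i := by omega
    rw [this, rot_add]
    have h4 : b ∣ (b - k % b + k) := by rw [Nat.add_comm]; exact bdvd hb k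
    rw [rot_dvd h4]

lemma pperm_val {n b k : ℕ} (hb : 1 ≤ b) (hbn : b ≤ n) (i : Fin n) :
    (Pperm n b k hb hbn i : ℕ) = Pfun n b k i := rfl

/-- closed form: with a = n - b, k' = k % b -/
lemma pfun_closed {n b k i : ℕ} (hb : 1 ≤ b) (hbn : b ≤ n) (hi : i < n) :
    Pfun n b k i = if i < n - b then n - 1 - i
      else if n - 1 - i + k % b < b then n - 1 - i + k % b else n - 1 - i + k % b - b := by
  unfold Pfun
  by_cases h : i < n - b
  · rw [if_pos h]; unfold rotFun; rw [if_neg (by omega)]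
  · rw [if_neg h, rot_closed (by omega)]
lemma bdes_pperm {n b k : ℕ} (hb : 1 ≤ b) (hbn : b ≤ n) (hk : k < b) :
    bdes (Pperm n b k hb hbn) = if 1 ≤ n - b ∧ 1 ≤ k then 1 else 0 := by
  have hkb : k % b = k := Nat.mod_eq_of_lt hk
  have key : ∀ i : ℕ, (i ∈ (Finset.range n).filter fun j =>
      ∃ hj : j + 1 < n, ((Pperm n b k hb hbn) ⟨j + 1, hj⟩ : ℕ) + 1 <
        ((Pperm n b k hb hbn) ⟨j, Nat.lt_of_succ_lt hj⟩ : ℕ)) ↔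
      (1 ≤ n - b ∧ 1 ≤ k ∧ i = n - b - 1) := by
    intro i
    rw [Finset.mem_filter, Finset.mem_range]
    simp only [pperm_val]
    constructor
    · rintro ⟨hi, hj, hlt⟩
      rw [pfun_closed hb hbn (by omega), pfun_closed hb hbn (by omega), hkb] at hlt
      split_ifs at hlt <;> omega
    · rintro ⟨h1, h2, rfl⟩
      refine ⟨by omega, by omega, ?_⟩
      rw [pfun_closed hb hbn (by omega), pfun_closed hb hbn (by omega), hkb]
      split_ifs <;> omega
  unfold bdes
  split_ifs with h
  · rw [show ((Finset.range n).filter _) = {n - b - 1} from Finset.ext fun i => by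
      rw [key i, Finset.mem_singleton]; constructor
      · rintro ⟨_, _, rfl⟩; rfl
      · rintro rfl; exact ⟨h.1, h.2, rfl⟩]
    rfl
  · rw [show ((Finset.range n).filter _) = ∅ from Finset.ext fun i => by
      rw [key i]; simp; omega]
    rfl
lemma iff_of_pairs {m n : ℕ} {σ : Equiv.Perm (Fin m)} {π : Equiv.Perm (Fin n)} {f : Fin m → Fin n}
    (hf : StrictMono f) (h : ∀ a b, a < b → (σ a < σ b ↔ π (f a) < π (f b))) :
    ∀ a b, σ a < σ b ↔ π (f a) < π (f b) := by
  intro a b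
  rcases lt_trichotomy a b with hab | rfl | hba
  · exact h a b hab
  · simp
  · have key := h b a hba
    have hσ : σ a ≠ σ b := fun e => hba.ne (σ.injective e).symm
    have hπ : π (f a) ≠ π (f b) := fun e => hba.ne (hf.injective (π.injective e)).symm
    constructor
    · intro hs
      rcases lt_or_gt_of_ne hπ with h' | h'
      · exact h'
      · exact absurd (key.mpr h') (asymm hs)
    · intro hp
      rcases lt_or_gt_of_ne hσ with h' | h'
      · exact h'
      · exact absurd (key.mp h') (asymm hp)

lemma strictMono_triple {n : ℕ} {i j l : Fin n} (hij : i < j) (hjl : j < l) :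
    StrictMono (![i, j, l] : Fin 3 → Fin n) := by
  intro a b hab
  fin_cases a <;> fin_cases b <;> first
    | exact absurd hab (by decide)
    | exact hij
    | exact hjl
    | exact hij.trans hjl

lemma contains123_iff {n : ℕ} (π : Equiv.Perm (Fin n)) :
    Contains π perm123 ↔ ∃ i j l : Fin n, i < j ∧ j < l ∧ π i < π j ∧ π j < π l := by
  constructor
  · rintro ⟨f, hf, hiff⟩
    exact ⟨f 0, f 1, f 2, hf (by decide), hf (by decide),
      (hiff 0 1).mp (by decide), (hiff 1 2).mp (by decide)⟩
  · rintro ⟨i, j, l, hij, hjl, h1, h2⟩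
    refine ⟨![i, j, l], strictMono_triple hij hjl, iff_of_pairs (strictMono_triple hij hjl) ?_⟩
    intro a b hab
    fin_cases a <;> fin_cases b <;> first
      | exact absurd hab (by decide)
      | exact iff_of_true (by decide) h1
      | exact iff_of_true (by decide) h2
      | exact iff_of_true (by decide) (h1.trans h2)

lemma contains231_iff {n : ℕ} (π : Equiv.Perm (Fin n)) :
    Contains π perm231 ↔ ∃ i j l : Fin n, i < j ∧ j < l ∧ π l < π i ∧ π i < π j := by
  constructor
  · rintro ⟨f, hf, hiff⟩
    exact ⟨f 0, f 1, f 2, hf (by decide), hf (by decide),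
      (hiff 2 0).mp (by decide), (hiff 0 1).mp (by decide)⟩
  · rintro ⟨i, j, l, hij, hjl, h1, h2⟩
    refine ⟨![i, j, l], strictMono_triple hij hjl, iff_of_pairs (strictMono_triple hij hjl) ?_⟩
    intro a b hab
    fin_cases a <;> fin_cases b <;> first
      | exact absurd hab (by decide)
      | exact iff_of_true (by decide) h2
      | exact iff_of_false (by decide) (asymm (h1.trans h2))
      | exact iff_of_false (by decide) (asymm h1)
lemma asc_pperm {n b k : ℕ} (hb : 1 ≤ b) (hbn : b ≤ n) (hk : k < b) {i j : Fin n}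
    (hij : i < j) (h : Pperm n b k hb hbn i < Pperm n b k hb hbn j) :
    n - b + k ≤ (j : ℕ) ∧ (i : ℕ) < n - b + k ∧
      (Pperm n b k hb hbn i : ℕ) < k ∧ k ≤ (Pperm n b k hb hbn j : ℕ) := by
  have hkb : k % b = k := Nat.mod_eq_of_lt hk
  rw [Fin.lt_def] at hij h
  rw [pperm_val, pperm_val, pfun_closed hb hbn i.isLt, pfun_closed hb hbn j.isLt, hkb] at h ⊢
  have hi := i.isLt
  have hj := j.isLt
  split_ifs at h ⊢ <;> omega

lemma low_pos_pperm {n b k : ℕ} (hb : 1 ≤ b) (hbn : b ≤ n) (hk : k < b) {i : Fin n}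
    (h : (Pperm n b k hb hbn i : ℕ) < k) : (i : ℕ) < n - b + k := by
  have hkb : k % b = k := Nat.mod_eq_of_lt hk
  rw [pperm_val, pfun_closed hb hbn i.isLt, hkb] at h
  have hi := i.isLt
  split_ifs at h <;> omega

lemma avoids_pperm {n b k : ℕ} (hb : 1 ≤ b) (hbn : b ≤ n) (hk : k < b) :
    Avoids (Pperm n b k hb hbn) perm123 ∧ Avoids (Pperm n b k hb hbn) perm231 := by
  constructor
  · intro hcon
    rw [contains123_iff] at hcon
    obtain ⟨i, j, l, hij, hjl, h1, h2⟩ := hcon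
    have A := asc_pperm hb hbn hk hij h1
    have B := asc_pperm hb hbn hk hjl h2
    omega
  · intro hcon
    rw [contains231_iff] at hcon
    obtain ⟨i, j, l, hij, hjl, h1, h2⟩ := hcon
    have A := asc_pperm hb hbn hk hij h2
    have hl : (Pperm n b k hb hbn l : ℕ) < k := lt_trans h1 A.2.2.1
    have := low_pos_pperm hb hbn hk hl
    have := Fin.lt_def.mp hjl
    omega
lemma card_filter_fin (n : ℕ) (p : ℕ → Prop) [DecidablePred p] :
    (Finset.univ.filter fun x : Fin n => p x.val).card = ((Finset.range n).filter p).card := by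
  refine Finset.card_bij (fun (x : Fin n) _ => (x : ℕ)) ?_ ?_ ?_
  · intro x hx
    simp only [Finset.mem_filter, Finset.mem_univ, true_and] at hx
    simp [Finset.mem_filter, Finset.mem_range, x.isLt, hx]
  · intro x _ y _ h
    exact Fin.ext h
  · intro y hy
    simp only [Finset.mem_filter, Finset.mem_range] at hy
    exact ⟨⟨y, hy.1⟩, by simp [Finset.mem_filter, hy.2], rfl⟩

lemma card_lt_filter {n : ℕ} (π : Equiv.Perm (Fin n)) (v : Fin n) :
    (Finset.univ.filter fun x => π x < v).card = v := by
  have h : (Finset.univ.filter fun x => π x < v) = (Finset.Iio v).map π.symm.toEmbedding := by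
    apply Finset.ext
    intro x
    simp only [Finset.mem_filter, Finset.mem_univ, true_and, Finset.mem_map,
      Finset.mem_Iio, Equiv.coe_toEmbedding]
    constructor
    · intro hx
      exact ⟨π x, hx, by simp⟩
    · rintro ⟨y, hy, rfl⟩
      simpa using hy
  rw [h, Finset.card_map, Fin.card_Iio]
lemma notmax_case {m : ℕ} (π : Equiv.Perm (Fin (m + 1)))
    (h1 : Avoids π perm123) (h2 : Avoids π perm231)
    (hmax : π 0 ≠ ⟨m, Nat.lt_succ_self m⟩) :
    π = Pperm (m + 1) (m + 1) (π.symm ⟨m, Nat.lt_succ_self m⟩ : ℕ)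
      (by omega) (le_refl _) := by
  set M : Fin (m + 1) := ⟨m, Nat.lt_succ_self m⟩ with hM
  set t : Fin (m + 1) := π.symm M with hT
  have hπt : π t = M := π.apply_symm_apply M
  have ht0 : (0 : ℕ) < (t : ℕ) := by
    by_contra h
    push_neg at h
    have ht : t = 0 := Fin.ext (by simpa using h)
    exact hmax (by rw [← hπt, ht])
  have hmaxlt : ∀ x : Fin (m + 1), x ≠ t → π x < M := by
    intro x hx
    have hne : π x ≠ M := fun e => hx (by rw [← hπt] at e; exact π.injective e)
    rw [Fin.lt_def]
    have := (π x).isLt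
    have : (π x : ℕ) ≠ m := fun e => hne (Fin.ext e)
    simp only [hM]
    omega
  have no123 : ∀ i j l : Fin (m + 1), i < j → j < l → ¬(π i < π j ∧ π j < π l) := by
    rintro i j l hij hjl ⟨a, b⟩
    exact h1 ((contains123_iff π).mpr ⟨i, j, l, hij, hjl, a, b⟩)
  have no231 : ∀ i j l : Fin (m + 1), i < j → j < l → ¬(π l < π i ∧ π i < π j) := by
    rintro i j l hij hjl ⟨a, b⟩
    exact h2 ((contains231_iff π).mpr ⟨i, j, l, hij, hjl, a, b⟩)
  have F1 : ∀ i l : Fin (m + 1), i < t → t < l → π i < π l := by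
    intro i l hi hl
    have hne : π i ≠ π l := fun e => (ne_of_lt (hi.trans hl)) (π.injective e)
    rcases lt_or_gt_of_ne hne with h | h
    · exact h
    · exact absurd ⟨h, hπt ▸ hmaxlt i (ne_of_lt hi)⟩ (no231 i t l hi hl)
  have F2 : ∀ i j : Fin (m + 1), i < j → j < t → π j < π i := by
    intro i j hij hjt
    have hne : π j ≠ π i := fun e => (ne_of_lt hij) (π.injective e).symm
    rcases lt_or_gt_of_ne hne with h | h
    · exact h
    · exact absurd ⟨h, hπt ▸ hmaxlt j (ne_of_lt hjt)⟩ (no123 i j t hij hjt)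
  have F3 : ∀ i j : Fin (m + 1), t < i → i < j → π j < π i := by
    intro i j hti hij
    have hne : π j ≠ π i := fun e => (ne_of_lt hij) (π.injective e).symm
    rcases lt_or_gt_of_ne hne with h | h
    · exact h
    · have h0i : (0 : Fin (m + 1)) < i := by
        rw [Fin.lt_def]; rw [Fin.lt_def] at hti; exact lt_trans ht0 hti
      have hp0 : π 0 < π i := F1 0 i (by rw [Fin.lt_def]; exact ht0) hti
      exact absurd ⟨hp0, h⟩ (no123 0 i j h0i hij)
  have hkmod : (t : ℕ) % (m + 1) = (t : ℕ) := Nat.mod_eq_of_lt t.isLt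
  have claim : ∀ i : Fin (m + 1), (π i : ℕ) = Pfun (m + 1) (m + 1) (t : ℕ) i := by
    intro i
    rcases lt_trichotomy i t with hit | rfl | hti
    · -- i < t : value is t - i - 1
      have hv := card_lt_filter π (π i)
      have hset : (Finset.univ.filter fun x => π x < π i) =
          (Finset.univ.filter fun x : Fin (m + 1) => (i : ℕ) < x.val ∧ x.val < (t : ℕ)) := by
        apply Finset.ext
        intro x
        simp only [Finset.mem_filter, Finset.mem_univ, true_and]
        constructor
        · intro hx
          rcases lt_trichotomy x i with h' | rfl | h'
          · exact absurd hx (asymm (F2 x i h' hit))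
          · exact absurd hx (lt_irrefl _)
          · rcases lt_trichotomy x t with h'' | rfl | h''
            · exact ⟨Fin.lt_def.mp h', Fin.lt_def.mp h''⟩
            · exact absurd hx (asymm (hπt ▸ hmaxlt i (ne_of_lt hit)))
            · exact absurd hx (asymm (F1 i x hit h''))
        · rintro ⟨hx1, hx2⟩
          exact F2 i x (Fin.lt_def.mpr hx1) (Fin.lt_def.mpr hx2)
      rw [hset, card_filter_fin (m + 1) (fun y => (i : ℕ) < y ∧ y < (t : ℕ))] at hv
      have hIoo : ((Finset.range (m + 1)).filter fun y => (i : ℕ) < y ∧ y < (t : ℕ)) =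
          Finset.Ioo (i : ℕ) (t : ℕ) := by
        apply Finset.ext
        intro y
        simp only [Finset.mem_filter, Finset.mem_range, Finset.mem_Ioo]
        have := t.isLt
        omega
      rw [hIoo, Nat.card_Ioo] at hv
      rw [pfun_closed (by omega) (le_refl _) i.isLt, hkmod]
      have := t.isLt
      have hi := Fin.lt_def.mp hit
      split_ifs <;> omega
    · -- i = t : value is m
      rw [pfun_closed (by omega) (le_refl _) t.isLt, hkmod]
      have := t.isLt
      have : (π t : ℕ) = m := by rw [hπt]
      split_ifs <;> omega
    · -- t < i : value is t + m - i
      have hv := card_lt_filter π (π i)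
      have hset : (Finset.univ.filter fun x => π x < π i) =
          (Finset.univ.filter fun x : Fin (m + 1) => x.val < (t : ℕ) ∨ (i : ℕ) < x.val) := by
        apply Finset.ext
        intro x
        simp only [Finset.mem_filter, Finset.mem_univ, true_and]
        constructor
        · intro hx
          rcases lt_trichotomy x t with h' | rfl | h'
          · exact Or.inl (Fin.lt_def.mp h')
          · exact absurd hx (asymm (hπt ▸ hmaxlt i (ne_of_gt hti)))
          · rcases lt_trichotomy x i with h'' | rfl | h''
            · exact absurd hx (asymm (F3 x i h' h''))
            · exact absurd hx (lt_irrefl _)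
            · exact Or.inr (Fin.lt_def.mp h'')
        · rintro (hx | hx)
          · exact F1 x i (Fin.lt_def.mpr hx) hti
          · exact F3 i x hti (Fin.lt_def.mpr hx)
      rw [hset, card_filter_fin (m + 1) (fun y => y < (t : ℕ) ∨ (i : ℕ) < y)] at hv
      have hcard : ((Finset.range (m + 1)).filter fun y => y < (t : ℕ) ∨ (i : ℕ) < y).card =
          (t : ℕ) + (m - (i : ℕ)) := by
        rw [Finset.filter_or, Finset.card_union_of_disjoint]
        · have e1 : ((Finset.range (m + 1)).filter fun y => y < (t : ℕ)) =
              Finset.range (t : ℕ) := by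
            apply Finset.ext; intro y
            simp only [Finset.mem_filter, Finset.mem_range]
            have := t.isLt; omega
          have e2 : ((Finset.range (m + 1)).filter fun y => (i : ℕ) < y) =
              Finset.Ioo (i : ℕ) (m + 1) := by
            apply Finset.ext; intro y
            simp only [Finset.mem_filter, Finset.mem_range, Finset.mem_Ioo]
            omega
          rw [e1, e2, Finset.card_range, Nat.card_Ioo]
          have := Fin.lt_def.mp hti
          have := i.isLt
          omega
        · rw [Finset.disjoint_left]
          intro y hy1 hy2
          simp only [Finset.mem_filter, Finset.mem_range] at hy1 hy2
          have := Fin.lt_def.mp hti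
          omega
      rw [hcard] at hv
      rw [pfun_closed (by omega) (le_refl _) i.isLt, hkmod]
      have := t.isLt
      have hi := i.isLt
      have := Fin.lt_def.mp hti
      split_ifs <;> omega
  exact Equiv.ext fun i => Fin.ext (by rw [claim i, pperm_val])
lemma classify : ∀ n : ℕ, ∀ π : Equiv.Perm (Fin n), 1 ≤ n →
    Avoids π perm123 → Avoids π perm231 →
    ∃ b k, ∃ (hb : 1 ≤ b) (hbn : b ≤ n), k < b ∧ π = Pperm n b k hb hbn := by
  intro n
  induction n with
  | zero => intro π h; omega
  | succ m IH =>
    intro π _ h1 h2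
    by_cases hmax : π 0 = ⟨m, Nat.lt_succ_self m⟩
    · rcases Nat.eq_zero_or_pos m with rfl | hm
      · haveI : Subsingleton (Fin (0 + 1)) := ⟨fun a b => Fin.ext (by omega)⟩
        exact ⟨1, 0, le_refl 1, le_refl 1, Nat.zero_lt_one,
          Equiv.ext fun i => Subsingleton.elim _ _⟩
      · have hv : ∀ i : Fin m, (π i.succ : ℕ) < m := by
          intro i
          have hne : π i.succ ≠ π 0 := fun e => (Fin.succ_ne_zero i) (π.injective e)
          have hlt := (π i.succ).isLt
          have : (π i.succ : ℕ) ≠ m := fun e => hne (by rw [hmax]; exact Fin.ext e)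
          omega
        have hinj : Function.Injective (fun i : Fin m => (⟨π i.succ, hv i⟩ : Fin m)) := by
          intro a b hab
          have hab' : (⟨(π a.succ : ℕ), hv a⟩ : Fin m) = ⟨(π b.succ : ℕ), hv b⟩ := hab
          have hv2 : ((⟨(π a.succ : ℕ), hv a⟩ : Fin m) : ℕ) =
              ((⟨(π b.succ : ℕ), hv b⟩ : Fin m) : ℕ) := congrArg Fin.val hab'
          have : π a.succ = π b.succ := Fin.ext hv2
          exact Fin.succ_injective m (π.injective this)
        set π' : Equiv.Perm (Fin m) :=
          Equiv.ofBijective _ (Finite.injective_iff_bijective.mp hinj) with hπ'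
        have hval : ∀ i : Fin m, (π' i : ℕ) = (π i.succ : ℕ) := fun i => rfl
        have trans123 : Avoids π' perm123 := by
          intro hc
          apply h1
          obtain ⟨g, hg, hiff⟩ := hc
          exact ⟨fun a => (g a).succ, Fin.strictMono_succ.comp hg, fun a b => hiff a b⟩
        have trans231 : Avoids π' perm231 := by
          intro hc
          apply h2
          obtain ⟨g, hg, hiff⟩ := hc
          exact ⟨fun a => (g a).succ, Fin.strictMono_succ.comp hg, fun a b => hiff a b⟩
        obtain ⟨b, k, hb, hbm, hk, heq⟩ := IH π' hm trans123 trans231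
        refine ⟨b, k, hb, hbm.trans (Nat.le_succ m), hk, ?_⟩
        apply Equiv.ext
        intro i
        apply Fin.ext
        refine Fin.cases ?_ ?_ i
        · rw [hmax, pperm_val]
          show m = Pfun (m + 1) b k (0 : ℕ)
          simp only [Pfun, rotFun, Fin.val_zero]
          rw [if_neg (by omega)]
          omega
        · intro j
          have hcong := congrArg (fun p : Equiv.Perm (Fin m) => ((p j : Fin m) : ℕ)) heq
          rw [pperm_val] at hcong ⊢
          rw [← hval j, hcong]
          show Pfun m b k (j : ℕ) = Pfun (m + 1) b k ((j.succ : Fin (m + 1)) : ℕ)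
          simp only [Pfun, Fin.val_succ]
          congr 1
          omega
    · exact ⟨m + 1, (π.symm ⟨m, Nat.lt_succ_self m⟩ : ℕ), by omega, le_refl _,
        (π.symm ⟨m, Nat.lt_succ_self m⟩).isLt, notmax_case π h1 h2 hmax⟩
lemma pperm_last {n b k : ℕ} (hb : 1 ≤ b) (hbn : b ≤ n) (hk : k < b) :
    (Pperm n b k hb hbn ⟨n - 1, by omega⟩ : ℕ) = k := by
  rw [pperm_val]
  simp only [Pfun, rotFun]
  rw [show n - 1 - (n - 1) = 0 from by omega, if_pos (by omega), Nat.zero_add,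
    Nat.mod_eq_of_lt hk]

lemma pperm_congr {n b k b' k' : ℕ} (hb : 1 ≤ b) (hbn : b ≤ n) (hb' : 1 ≤ b') (hbn' : b' ≤ n)
    (e1 : b = b') (e2 : k = k') : Pperm n b k hb hbn = Pperm n b' k' hb' hbn' := by
  subst e1; subst e2; rfl

lemma pperm_ne_of_blt {n b k b' k' : ℕ} (hb : 1 ≤ b) (hbn : b ≤ n) (hk : k < b)
    (hb' : 1 ≤ b') (hbn' : b' ≤ n) (hk' : k' < b') (hk'1 : 1 ≤ k') (hbb : b < b') :
    Pperm n b k hb hbn ≠ Pperm n b' k' hb' hbn' := by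
  intro heq
  have hc := congrArg (fun p : Equiv.Perm (Fin n) => ((p ⟨n - 1 - b, by omega⟩ : Fin n) : ℕ)) heq
  simp only [pperm_val] at hc
  have harg : n - 1 - (n - 1 - b) = b := by omega
  simp only [Pfun, harg, rotFun] at hc
  rw [if_neg (lt_irrefl b), if_pos hbb] at hc
  rcases Nat.lt_or_ge (b + k') b' with h | h
  · rw [Nat.mod_eq_of_lt h] at hc; omega
  · rw [Nat.mod_eq_sub_mod h, Nat.mod_eq_of_lt (by omega)] at hc; omega

lemma pperm_k0 {n b : ℕ} (hb : 1 ≤ b) (hbn : b ≤ n) (hn : 1 ≤ n) :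
    Pperm n b 0 hb hbn = Pperm n n 0 hn (le_refl n) := by
  apply Equiv.ext
  intro i
  apply Fin.ext
  rw [pperm_val, pperm_val]
  simp only [Pfun]
  rw [rot_dvd (dvd_zero b), rot_dvd (dvd_zero n)]
def g0 {n : ℕ} (hn : 1 ≤ n) (k : Fin n) :
    {π : Equiv.Perm (Fin n) // (Avoids π perm123 ∧ Avoids π perm231) ∧ bdes π = 0} :=
  ⟨Pperm n n k hn (le_refl n),
    ⟨avoids_pperm hn (le_refl n) k.isLt, by
      rw [bdes_pperm hn (le_refl n) k.isLt, if_neg (by omega)]⟩⟩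

def g1 {n : ℕ} (hn : 1 ≤ n) (p : Σ x : Fin (n - 1), Fin x.val) :
    {π : Equiv.Perm (Fin n) // (Avoids π perm123 ∧ Avoids π perm231) ∧ bdes π = 1} :=
  ⟨Pperm n (p.1.val + 1) (p.2.val + 1) (by omega) (by have := p.1.isLt; omega),
    ⟨avoids_pperm _ _ (by have := p.2.isLt; omega), by
      rw [bdes_pperm _ _ (by have := p.2.isLt; omega),
        if_pos ⟨by have := p.1.isLt; omega, by omega⟩]⟩⟩

lemma g0_bij {n : ℕ} (hn : 1 ≤ n) : Function.Bijective (g0 hn) := by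
  constructor
  · intro a b hab
    have h := congrArg (fun s : {π : Equiv.Perm (Fin n) //
        (Avoids π perm123 ∧ Avoids π perm231) ∧ bdes π = 0} =>
        ((s.val ⟨n - 1, by omega⟩ : Fin n) : ℕ)) hab
    simp only [g0] at h
    rw [pperm_last hn (le_refl n) a.isLt, pperm_last hn (le_refl n) b.isLt] at h
    exact Fin.ext h
  · rintro ⟨π, ⟨hA, hB⟩, hbd⟩
    obtain ⟨b, k, hb, hbn, hk, heq⟩ := classify n π hn hA hB
    by_cases hbe : b = n
    · refine ⟨⟨k, by omega⟩, Subtype.ext ?_⟩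
      show Pperm n n ((⟨k, by omega⟩ : Fin n) : ℕ) hn (le_refl n) = π
      rw [heq]
      exact pperm_congr hn (le_refl n) hb hbn hbe.symm rfl
    · have hbltn : b < n := lt_of_le_of_ne hbn hbe
      rw [heq, bdes_pperm hb hbn hk] at hbd
      have hk0 : k = 0 := by split_ifs at hbd with h <;> omega
      subst hk0
      refine ⟨⟨0, by omega⟩, Subtype.ext ?_⟩
      show Pperm n n ((⟨0, by omega⟩ : Fin n) : ℕ) hn (le_refl n) = π
      rw [heq, pperm_k0 hb hbn hn]

lemma g1_bij {n : ℕ} (hn : 1 ≤ n) : Function.Bijective (g1 hn) := by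
  constructor
  · rintro ⟨x, y⟩ ⟨x', y'⟩ hpq
    have heq := congrArg Subtype.val hpq
    simp only [g1] at heq
    have hxx : x.val = x'.val := by
      by_contra hne
      rcases Nat.lt_or_ge x.val x'.val with h | h
      · exact pperm_ne_of_blt _ _ (by have := y.isLt; omega) _ _
          (by have := y'.isLt; omega) (by omega) (by omega) heq
      · exact pperm_ne_of_blt _ _ (by have := y'.isLt; omega) _ _
          (by have := y.isLt; omega) (by omega) (by omega) heq.symm
    have hx : x = x' := Fin.ext hxx
    subst hx
    have hlast := congrArg
      (fun q : Equiv.Perm (Fin n) => ((q ⟨n - 1, by omega⟩ : Fin n) : ℕ)) heq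
    rw [pperm_last _ _ (by have := y.isLt; omega),
      pperm_last _ _ (by have := y'.isLt; omega)] at hlast
    have hy : y = y' := Fin.ext (by omega)
    rw [hy]
  · rintro ⟨π, ⟨hA, hB⟩, hbd⟩
    obtain ⟨b, k, hb, hbn, hk, heq⟩ := classify n π hn hA hB
    rw [heq, bdes_pperm hb hbn hk] at hbd
    have hcond : 1 ≤ n - b ∧ 1 ≤ k := by
      by_contra hcon
      rw [if_neg hcon] at hbd
      omega
    refine ⟨⟨⟨b - 1, by omega⟩, ⟨k - 1, by show k - 1 < b - 1; omega⟩⟩, Subtype.ext ?_⟩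
    show Pperm n (b - 1 + 1) (k - 1 + 1) (by omega) (by omega) = π
    rw [heq]
    exact pperm_congr _ _ _ _ (by omega) (by omega)

/-- For `n ≥ 1`: among permutations of length `n` avoiding both 123 and 231, exactly `n`
have no big descents, exactly `C(n-1,2)` have one big descent, and none have two or more. -/
theorem bdes_distribution_avoids123_231 (n : ℕ) (hn : 1 ≤ n) :
    Nat.card {π : Equiv.Perm (Fin n) // (Avoids π perm123 ∧ Avoids π perm231) ∧ bdes π = 0} = n ∧
    Nat.card {π : Equiv.Perm (Fin n) // (Avoids π perm123 ∧ Avoids π perm231) ∧ bdes π = 1} =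
      Nat.choose (n - 1) 2 ∧
    ∀ k, 2 ≤ k →
      Nat.card {π : Equiv.Perm (Fin n) // (Avoids π perm123 ∧ Avoids π perm231) ∧ bdes π = k}
        = 0 := by
  refine ⟨?_, ?_, ?_⟩
  · rw [← Nat.card_congr (Equiv.ofBijective (g0 hn) (g0_bij hn))]
    simp
  · rw [← Nat.card_congr (Equiv.ofBijective (g1 hn) (g1_bij hn))]
    rw [Nat.card_eq_fintype_card, Fintype.card_sigma]
    simp only [Fintype.card_fin]
    rw [Fin.sum_univ_eq_sum_range (fun i => i) (n - 1), Finset.sum_range_id,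
      Nat.choose_two_right]
  · intro k hk
    have : IsEmpty {π : Equiv.Perm (Fin n) //
        (Avoids π perm123 ∧ Avoids π perm231) ∧ bdes π = k} := by
      constructor
      rintro ⟨π, ⟨hA, hB⟩, hbd⟩
      obtain ⟨b, k', hb, hbn, hk', heq⟩ := classify n π hn hA hB
      rw [heq, bdes_pperm hb hbn hk'] at hbd
      split_ifs at hbd <;> omega
    exact Nat.card_of_isEmpty
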